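/- Fix real numbers β ≠ 0 and λ ∈ (−1,1). For each n ≥ 1 let T_n be a finite tree with n vertices and let Σ_n be the matrix indexed by the vertices of T_n with (Σ_n)_{σ,τ} = β² λ^{d(σ,τ)}. Then n · (1^T Σ_n^{-1} 1)^{-1} converges to ((1 + λ)/(1 − λ)) · β² as n → ∞. In particular, under a rank-two model, n times the variance of the GLS estimator converges to ((1 + λ)/(1 − λ)) β². -/

import Mathlib

open Matrix BigOperators Filter

section AuxTreeLemmas

open SimpleGraph

variable {V : Type*} {G : SimpleGraph V}

lemma tree_path_length (hT : G.IsTree) {u v : V} {w : G.Walk u v} (hw : w.IsPath) :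
    w.length = G.dist u v := by
  classical
  obtain ⟨w0, hw0⟩ := hT.isConnected.exists_walk_length_eq_dist u v
  have h1 : w = w0.bypass := (hT.existsUnique_path u v).unique hw w0.bypass_isPath
  have h2 : w.length ≤ G.dist u v := h1 ▸ hw0 ▸ w0.length_bypass_le
  exact le_antisymm h2 (SimpleGraph.dist_le w)

lemma tree_neighbor (hT : G.IsTree) {σ τ : V} (h : σ ≠ τ) :
    ∃ q, G.Adj τ q ∧ G.dist σ q + 1 = G.dist σ τ ∧
      ∀ r, G.Adj τ r → r ≠ q → G.dist σ r = G.dist σ τ + 1 := by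
  classical
  obtain ⟨p, hp, -⟩ := hT.existsUnique_path τ σ
  cases p with
  | nil => exact absurd rfl h.symm
  | cons hadj p' =>
    rename_i q
    have hp' : p'.IsPath := hp.of_cons
    have hτ : τ ∉ p'.support := by
      have := hp.support_nodup
      simp [Walk.support_cons] at this
      exact this.1
    have hd' : G.dist σ q = p'.length := by
      rw [SimpleGraph.dist_comm]; exact (tree_path_length hT hp').symm
    have hd : G.dist σ τ = p'.length + 1 := by
      rw [SimpleGraph.dist_comm, ← tree_path_length hT hp]; simp
    refine ⟨q, hadj, by omega, ?_⟩
    intro r hr hrq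
    have hrsup : r ∉ (Walk.cons hadj p').support := by
      simp only [Walk.support_cons, List.mem_cons]
      push_neg
      refine ⟨fun e => hr.ne e.symm, fun hmem => ?_⟩
      have hdrop : (p'.dropUntil r hmem).IsPath := hp'.dropUntil hmem
      have hτd : τ ∉ (p'.dropUntil r hmem).support :=
        fun hc => hτ (p'.support_dropUntil_subset hmem hc)
      have hpath2 : (Walk.cons hr (p'.dropUntil r hmem)).IsPath := hdrop.cons hτd
      have heq := (hT.existsUnique_path τ σ).unique hpath2 hp
      have h1 := congrArg (fun w => w.getVert 1) heq
      simp only [Walk.getVert_cons _ _ one_ne_zero, Nat.sub_self, Walk.getVert_zero] at h1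
      exact hrq h1
    have hpath3 : (Walk.cons hr.symm (Walk.cons hadj p')).IsPath := hp.cons hrsup
    have hlen := tree_path_length hT hpath3
    rw [SimpleGraph.dist_comm (u := σ) (v := r), ← hlen]
    simp [hd]

lemma key_dot (β lam : ℝ) (hβ : β ≠ 0) (hlam : lam ∈ Set.Ioo (-1:ℝ) 1)
    {V : Type*} [Fintype V] [DecidableEq V] (G : SimpleGraph V) (hT : G.IsTree) :
    (fun _ => (1:ℝ)) ⬝ᵥ ((Matrix.of fun σ τ : V => β^2 * lam ^ (G.dist σ τ))⁻¹
      *ᵥ fun _ => (1:ℝ))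
      = ((Fintype.card V : ℝ) * (1-lam) + 2*lam) / ((1+lam) * β^2) := by
  classical
  obtain ⟨hl1, hl2⟩ := hlam
  have h1m : (1:ℝ) - lam ≠ 0 := by nlinarith
  have h1p : (1:ℝ) + lam ≠ 0 := by nlinarith
  set c : ℝ := β^2 * (1 - lam^2) with hc_def
  have hc : c ≠ 0 := by
    have : (1:ℝ) - lam^2 ≠ 0 := by nlinarith
    exact mul_ne_zero (pow_ne_zero 2 hβ) this
  set Sm : Matrix V V ℝ := Matrix.of fun σ τ : V => β^2 * lam ^ (G.dist σ τ) with hSm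
  set M : Matrix V V ℝ := Matrix.of fun s t =>
    (if s = t then 1 + lam^2*((G.degree t : ℝ)-1) else 0)
      + (if G.Adj s t then -lam else 0) with hM
  -- neighbor sums
  have hnbr : ∀ σ τ : V, σ ≠ τ →
      ∑ t ∈ G.neighborFinset τ, lam ^ (G.dist σ t)
        = lam ^ (G.dist σ τ - 1) + ((G.degree τ : ℝ) - 1) * lam ^ (G.dist σ τ + 1) := by
    intro σ τ hne
    obtain ⟨q, hq, hdq, hother⟩ := tree_neighbor hT hne
    have hqmem : q ∈ G.neighborFinset τ := by simpa using hq
    rw [← Finset.add_sum_erase _ _ hqmem]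
    have hdq' : G.dist σ q = G.dist σ τ - 1 := by omega
    rw [hdq']
    congr 1
    have hcong : ∀ t ∈ (G.neighborFinset τ).erase q,
        lam ^ (G.dist σ t) = lam ^ (G.dist σ τ + 1) := by
      intro t ht
      simp only [Finset.mem_erase, SimpleGraph.mem_neighborFinset] at ht
      rw [hother t ht.2 ht.1]
    rw [Finset.sum_congr rfl hcong, Finset.sum_const, nsmul_eq_mul,
      Finset.card_erase_of_mem hqmem]
    have hdeg : 1 ≤ G.degree τ := by
      rw [← SimpleGraph.card_neighborFinset_eq_degree]
      exact Finset.card_pos.mpr ⟨q, hqmem⟩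
    rw [SimpleGraph.card_neighborFinset_eq_degree]
    push_cast [hdeg]
    ring
  -- the matrix identity
  have hmul : Sm * M = c • (1 : Matrix V V ℝ) := by
    ext σ τ
    simp only [Matrix.mul_apply, Matrix.smul_apply, Matrix.one_apply, hSm, hM, Matrix.of_apply]
    rw [Finset.sum_congr rfl (fun t _ => by split_ifs <;> ring :
      ∀ t ∈ Finset.univ, β ^ 2 * lam ^ G.dist σ t *
        ((if t = τ then 1 + lam^2*((G.degree τ : ℝ)-1) else 0)
          + (if G.Adj t τ then -lam else 0))
        = (if t = τ then β ^ 2 * lam ^ G.dist σ t * (1 + lam^2*((G.degree τ : ℝ)-1)) else 0)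
          + (if G.Adj t τ then β ^ 2 * lam ^ G.dist σ t * (-lam) else 0))]
    rw [Finset.sum_add_distrib, Finset.sum_ite_eq' Finset.univ τ]
    have hadjsum : ∑ t : V, (if G.Adj t τ then β ^ 2 * lam ^ G.dist σ t * (-lam) else 0)
        = β^2 * (-lam) * ∑ t ∈ G.neighborFinset τ, lam ^ (G.dist σ t) := by
      rw [Finset.mul_sum, ← Finset.sum_filter]
      apply Finset.sum_congr
      · ext t; simp [SimpleGraph.mem_neighborFinset, adj_comm]
      · intro t _; ring
    rw [hadjsum]
    by_cases hστ : σ = τ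
    · subst hστ
      simp only [if_pos rfl, Finset.mem_univ, SimpleGraph.dist_self, pow_zero]
      have hcong : ∀ t ∈ G.neighborFinset σ, lam ^ (G.dist σ t) = lam := by
        intro t ht
        rw [SimpleGraph.mem_neighborFinset] at ht
        rw [(SimpleGraph.dist_eq_one_iff_adj).mpr ht, pow_one]
      rw [Finset.sum_congr rfl hcong, Finset.sum_const, nsmul_eq_mul,
        SimpleGraph.card_neighborFinset_eq_degree, hc_def]
      simp only [Finset.mem_univ, if_true, smul_eq_mul]
      ring
    · simp only [Finset.mem_univ, if_true]
      rw [if_neg hστ, hnbr σ τ hστ]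
      have hd1 : 0 < G.dist σ τ := hT.isConnected.pos_dist_of_ne hστ
      obtain ⟨e, he⟩ : ∃ e, G.dist σ τ = e + 1 := ⟨G.dist σ τ - 1, by omega⟩
      rw [he, smul_zero]
      simp only [Nat.add_sub_cancel]
      ring
  have hinv : Sm⁻¹ = c⁻¹ • M := by
    apply Matrix.inv_eq_right_inv
    rw [Matrix.mul_smul, hmul, smul_smul, inv_mul_cancel₀ hc, one_smul]
  rw [hinv]
  have hnV : Nonempty V := hT.isConnected.nonempty
  have hn1 : 1 ≤ Fintype.card V := Fintype.card_pos
  have hS : ∑ σ : V, (G.degree σ : ℝ) = 2 * ((Fintype.card V : ℝ) - 1) := by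
    have h1 := SimpleGraph.sum_degrees_eq_twice_card_edges G
    have h2 := hT.card_edgeFinset
    have h3 : ∑ σ : V, G.degree σ + 2 = 2 * Fintype.card V := by omega
    have h4 : ((∑ σ : V, G.degree σ : ℕ) : ℝ) + 2 = 2 * (Fintype.card V : ℝ) := by
      exact_mod_cast congrArg (Nat.cast : ℕ → ℝ) h3
    push_cast at h4
    linarith
  have hrow : ∀ σ : V, ∑ τ : V, M σ τ = (1 - lam^2) + (lam^2 - lam) * (G.degree σ : ℝ) := by
    intro σ
    simp only [hM, Matrix.of_apply]
    rw [Finset.sum_add_distrib, Finset.sum_ite_eq Finset.univ σ]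
    have : ∑ τ : V, (if G.Adj σ τ then -lam else 0) = -lam * (G.degree σ : ℝ) := by
      rw [← Finset.sum_filter]
      have : Finset.univ.filter (G.Adj σ) = G.neighborFinset σ := by
        ext t; simp [SimpleGraph.mem_neighborFinset]
      rw [this, Finset.sum_const, nsmul_eq_mul, SimpleGraph.card_neighborFinset_eq_degree]
      ring
    rw [this]
    simp only [Finset.mem_univ, if_pos]
    ring
  have hdot : (fun _ => (1:ℝ)) ⬝ᵥ ((c⁻¹ • M) *ᵥ fun _ => (1:ℝ))
      = c⁻¹ * ∑ σ : V, ∑ τ : V, M σ τ := by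
    simp only [dotProduct, Matrix.mulVec, Matrix.smul_apply, dotProduct,
      smul_eq_mul, one_mul, mul_one, Finset.mul_sum]
  rw [hdot, Finset.sum_congr rfl (fun σ _ => hrow σ), Finset.sum_add_distrib,
    Finset.sum_const, ← Finset.mul_sum, hS, nsmul_eq_mul, Finset.card_univ, hc_def]
  have h1l2 : (1:ℝ) - lam^2 ≠ 0 := by nlinarith
  field_simp
  ring


end AuxTreeLemmas

/-- Fix `β ≠ 0` and `λ ∈ (-1,1)`. For each `n ≥ 1`, let `T_n` be a tree
on `n` vertices and `Σ_n` the matrix with entries `β² λ^{d(σ,τ)}`. Then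
`n · (1ᵀ Σ_n⁻¹ 1)⁻¹ → ((1+λ)/(1−λ)) β²` as `n → ∞`: under a rank-two model,
`n` times the variance of the GLS estimator converges to `((1+λ)/(1−λ)) β²`. -/
theorem rank_two_gls_variance_limit (β lam : ℝ) (hβ : β ≠ 0)
    (hlam : lam ∈ Set.Ioo (-1 : ℝ) 1)
    (G : (n : ℕ) → SimpleGraph (Fin n)) (hG : ∀ n, 1 ≤ n → (G n).IsTree) :
    Tendsto
      (fun n : ℕ => (n : ℝ) *
        ((fun _ => (1 : ℝ)) ⬝ᵥ
          ((Matrix.of fun σ τ : Fin n => β ^ 2 * lam ^ ((G n).dist σ τ))⁻¹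
            *ᵥ fun _ => (1 : ℝ)))⁻¹)
      atTop (nhds ((1 + lam) / (1 - lam) * β ^ 2)) := by
  obtain ⟨hl1, hl2⟩ := hlam
  have h1m : (1:ℝ) - lam ≠ 0 := by nlinarith
  have h1p : (1:ℝ) + lam ≠ 0 := by nlinarith
  have hlim : Tendsto (fun n : ℕ => ((1+lam) * β^2) / ((1-lam) + 2*lam*((n:ℝ))⁻¹))
      atTop (nhds ((1 + lam) / (1 - lam) * β ^ 2)) := by
    have hinv : Tendsto (fun n : ℕ => ((n:ℝ))⁻¹) atTop (nhds 0) :=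
      tendsto_inv_atTop_zero.comp tendsto_natCast_atTop_atTop
    have hden : Tendsto (fun n : ℕ => (1-lam) + 2*lam*((n:ℝ))⁻¹) atTop (nhds (1-lam)) := by
      have := (tendsto_const_nhds (x := (2*lam : ℝ)) (f := atTop)).mul hinv
      simpa using (tendsto_const_nhds (x := (1-lam : ℝ)) (f := atTop)).add this
    have := (tendsto_const_nhds (x := ((1+lam)*β^2 : ℝ)) (f := atTop)).div hden h1m
    convert this using 2
    · rfl
    · ring
  apply Tendsto.congr' _ hlim
  filter_upwards [eventually_ge_atTop 1] with n hn
  have hT := hG n hn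
  have hcard : (Fintype.card (Fin n) : ℝ) = (n : ℝ) := by simp
  rw [key_dot β lam hβ ⟨hl1, hl2⟩ (G n) hT, hcard]
  have hn' : (0:ℝ) < (n:ℝ) := by exact_mod_cast hn
  have hn1 : (1:ℝ) ≤ (n:ℝ) := by exact_mod_cast hn
  have hpos : (0:ℝ) < (n:ℝ)*(1-lam) + 2*lam := by nlinarith
  rw [inv_div]
  have h2 : (1:ℝ) - lam + 2*lam*((n:ℝ))⁻¹ = ((n:ℝ)*(1-lam)+2*lam) / (n:ℝ) := by
    field_simp
  rw [h2, div_div_eq_mul_div]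
  ring
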